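/- For γ > -1, let F_{j,γ}(f) = ∫₀¹ t^γ(1-t)^γ f(t m_{j+1} + (1-t) m_{j+2}) dt, where m₁, m₂, m₃ are the edge midpoints of a nondegenerate triangle (indices mod 3), and let φᵢ = λᵢ(1 - 3λ_{i+1} - 3λ_{i+2}). Then F_{j,γ}(φⱼ) = -σ_γ/4 and F_{j,γ}(φᵢ) = σ_γ · (-(5γ+6)/(8(2γ+3))) for i ≠ j, where σ_γ = B(γ+1, γ+1) is the beta function value. -/

import Mathlib

open MeasureTheory

lemma affine_comb (f : (Fin 2 → ℝ) →ᵃ[ℝ] ℝ) (a b : Fin 2 → ℝ) (t : ℝ) :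
    f (t • a + (1 - t) • b) = t * f a + (1 - t) * f b := by
  have h : t • a + (1 - t) • b = AffineMap.lineMap b a t := by
    simp only [AffineMap.lineMap_apply, vsub_eq_sub, vadd_eq_add]
    module
  rw [h, AffineMap.apply_lineMap]
  simp only [AffineMap.lineMap_apply, vsub_eq_sub, vadd_eq_add, smul_eq_mul]
  ring

lemma beta_integrand_eq {a b x : ℝ} (h0 : 0 ≤ x) (h1 : x ≤ 1) :
    (x:ℂ) ^ (((a+1:ℝ):ℂ) - 1) * ((1:ℂ) - (x:ℂ)) ^ (((b+1:ℝ):ℂ) - 1)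
      = ((x ^ a * (1 - x) ^ b : ℝ) : ℂ) := by
  rw [Complex.ofReal_mul, Complex.ofReal_cpow h0, Complex.ofReal_cpow (by linarith : (0:ℝ) ≤ 1 - x)]
  push_cast
  ring

lemma beta_integrable {a b : ℝ} (ha : -1 < a) (hb : -1 < b) :
    IntervalIntegrable (fun t : ℝ => t ^ a * (1 - t) ^ b) volume 0 1 := by
  have hc := Complex.betaIntegral_convergent
      (u := ((a+1:ℝ):ℂ)) (v := ((b+1:ℝ):ℂ))
      (by simp; linarith) (by simp; linarith)
  rw [intervalIntegrable_iff] at hc ⊢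
  refine MeasureTheory.IntegrableOn.congr_fun hc.re (fun x hx => ?_) measurableSet_uIoc
  rw [Set.uIoc_of_le (by norm_num : (0:ℝ) ≤ 1)] at hx
  show RCLike.re _ = _
  rw [beta_integrand_eq hx.1.le hx.2]
  simp

lemma beta_eval {a b : ℝ} (ha : -1 < a) (hb : -1 < b) :
    (∫ t in (0:ℝ)..1, t ^ a * (1 - t) ^ b)
      = Real.Gamma (a+1) * Real.Gamma (b+1) / Real.Gamma (a+b+2) := by
  have hab : (0:ℝ) < a + b + 2 := by linarith
  have hre : Complex.betaIntegral ((a+1:ℝ):ℂ) ((b+1:ℝ):ℂ)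
      = ((∫ t in (0:ℝ)..1, t ^ a * (1 - t) ^ b : ℝ) : ℂ) := by
    rw [Complex.betaIntegral, ← intervalIntegral.integral_ofReal]
    apply intervalIntegral.integral_congr
    intro x hx
    rw [Set.uIcc_of_le (by norm_num : (0:ℝ) ≤ 1)] at hx
    exact beta_integrand_eq hx.1 hx.2
  have hg := Complex.Gamma_mul_Gamma_eq_betaIntegral
      (s := ((a+1:ℝ):ℂ)) (t := ((b+1:ℝ):ℂ)) (by simp; linarith) (by simp; linarith)
  rw [hre, show ((a+1:ℝ):ℂ) + ((b+1:ℝ):ℂ) = ((a+b+2:ℝ):ℂ) by push_cast; ring,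
    Complex.Gamma_ofReal, Complex.Gamma_ofReal, Complex.Gamma_ofReal] at hg
  have hg' : Real.Gamma (a+1) * Real.Gamma (b+1)
      = Real.Gamma (a+b+2) * ∫ t in (0:ℝ)..1, t ^ a * (1 - t) ^ b := by
    exact_mod_cast hg
  rw [eq_div_iff (Real.Gamma_pos_of_pos hab).ne']
  linarith [hg']

noncomputable def phiAF (lam : Fin 3 → ((Fin 2 → ℝ) →ᵃ[ℝ] ℝ)) (i : Fin 3)
    (x : Fin 2 → ℝ) : ℝ :=
  lam i x * (1 - 3 * lam (i + 1) x - 3 * lam (i + 2) x)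

/-- Edge midpoints of the triangle. -/
noncomputable def midpt (v : Fin 3 → (Fin 2 → ℝ)) (j : Fin 3) : Fin 2 → ℝ :=
  (v (j + 1) + v (j + 2)) / 2

theorem first_class_functionals_on_phi
    (v : Fin 3 → (Fin 2 → ℝ)) (lam : Fin 3 → ((Fin 2 → ℝ) →ᵃ[ℝ] ℝ))
    (hv : AffineIndependent ℝ v)
    (hdelta : ∀ i j, lam i (v j) = if i = j then 1 else 0)
    (hsum : ∀ x, lam 0 x + lam 1 x + lam 2 x = 1)
    (γ : ℝ) (hγ : -1 < γ)
    (σ : ℝ) (hσ : σ = ∫ u in (0:ℝ)..1, u ^ γ * (1 - u) ^ γ) :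
    ∀ j : Fin 3,
      (∫ t in (0:ℝ)..1, t ^ γ * (1 - t) ^ γ *
          phiAF lam j (t • midpt v (j + 1) + (1 - t) • midpt v (j + 2)))
        = -σ / 4 ∧
      ∀ i : Fin 3, i ≠ j →
        (∫ t in (0:ℝ)..1, t ^ γ * (1 - t) ^ γ *
            phiAF lam i (t • midpt v (j + 1) + (1 - t) • midpt v (j + 2)))
          = σ * (-(5 * γ + 6) / (8 * (2 * γ + 3))) := by
  intro j
  -- Fin 3 index facts
  have e1 : ∀ k : Fin 3, k + 1 + 1 = k + 2 := by decide
  have e2 : ∀ k : Fin 3, k + 1 + 2 = k := by decide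
  have e3 : ∀ k : Fin 3, k + 2 + 1 = k := by decide
  have e4 : ∀ k : Fin 3, k + 2 + 2 = k + 1 := by decide
  have n1 : ∀ k : Fin 3, k ≠ k + 1 := by decide
  have n2 : ∀ k : Fin 3, k ≠ k + 2 := by decide
  have n1' : ∀ k : Fin 3, k + 1 ≠ k := by decide
  have n2' : ∀ k : Fin 3, k + 2 ≠ k := by decide
  have n3 : ∀ k : Fin 3, k + 1 ≠ k + 2 := by decide
  have n3' : ∀ k : Fin 3, k + 2 ≠ k + 1 := by decide
  have tri : ∀ a b : Fin 3, a ≠ b → a = b + 1 ∨ a = b + 2 := by decide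
  -- lambda at midpoints
  have hm : ∀ (i k : Fin 3), lam i (midpt v k)
      = (lam i (v (k+1)) + lam i (v (k+2))) / 2 := by
    intro i k
    have hmk : midpt v k = (1/2 : ℝ) • v (k+1) + (1 - 1/2 : ℝ) • v (k+2) := by
      funext x
      simp [midpt]
      ring
    rw [hmk, affine_comb]
    ring
  -- lambda along the segment
  have P0 : ∀ t : ℝ, lam j (t • midpt v (j+1) + (1-t) • midpt v (j+2)) = 1/2 := by
    intro t
    rw [affine_comb, hm, hm, e1, e2, e3, e4]
    simp only [hdelta]
    simp only [if_neg (n2 j), if_pos rfl, if_neg (n1 j), if_true]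
    ring
  have P1 : ∀ t : ℝ, lam (j+1) (t • midpt v (j+1) + (1-t) • midpt v (j+2)) = (1-t)/2 := by
    intro t
    rw [affine_comb, hm, hm, e1, e2, e3, e4]
    simp only [hdelta]
    simp only [if_neg (n3 j), if_neg (n1' j), if_pos rfl, if_true]
    ring
  have P2 : ∀ t : ℝ, lam (j+2) (t • midpt v (j+1) + (1-t) • midpt v (j+2)) = t/2 := by
    intro t
    rw [affine_comb, hm, hm, e1, e2, e3, e4]
    simp only [hdelta]
    simp only [if_pos rfl, if_neg (n2' j), if_neg (n3' j), if_true]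
    ring
  -- phi values along the segment
  have F0 : ∀ t : ℝ, phiAF lam j (t • midpt v (j+1) + (1-t) • midpt v (j+2)) = -(1/4) := by
    intro t
    unfold phiAF
    rw [P0, P1, P2]
    ring
  have F1 : ∀ t : ℝ, phiAF lam (j+1) (t • midpt v (j+1) + (1-t) • midpt v (j+2))
      = ((1-t)/2) * (1 - 3 * (t/2) - 3 * (1/2)) := by
    intro t
    unfold phiAF
    rw [e1, e2, P0, P1, P2]
  have F2 : ∀ t : ℝ, phiAF lam (j+2) (t • midpt v (j+1) + (1-t) • midpt v (j+2))
      = (t/2) * (1 - 3 * (1/2) - 3 * ((1-t)/2)) := by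
    intro t
    unfold phiAF
    rw [e3, e4, P0, P1, P2]
  -- Gamma bookkeeping
  have hγ1 : (0:ℝ) < γ + 1 := by linarith
  have hγ' : -1 < γ + 1 := by linarith
  have hγ'' : -1 < γ + 2 := by linarith
  have hG1 : 0 < Real.Gamma (γ + 1) := Real.Gamma_pos_of_pos hγ1
  have hG2 : 0 < Real.Gamma (2*γ + 2) := Real.Gamma_pos_of_pos (by linarith)
  have g2 : Real.Gamma (γ + 2) = (γ+1) * Real.Gamma (γ+1) := by
    rw [show γ + 2 = (γ+1) + 1 by ring, Real.Gamma_add_one (by linarith)]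
  have g3 : Real.Gamma (γ + 3) = (γ+2) * ((γ+1) * Real.Gamma (γ+1)) := by
    rw [show γ + 3 = (γ+2) + 1 by ring, Real.Gamma_add_one (by linarith), g2]
  have G3 : Real.Gamma (2*γ + 3) = (2*γ+2) * Real.Gamma (2*γ+2) := by
    rw [show 2*γ + 3 = (2*γ+2) + 1 by ring, Real.Gamma_add_one (by linarith)]
  have G4 : Real.Gamma (2*γ + 4) = (2*γ+3) * ((2*γ+2) * Real.Gamma (2*γ+2)) := by
    rw [show 2*γ + 4 = (2*γ+3) + 1 by ring, Real.Gamma_add_one (by linarith), G3]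
  have hσ' : σ = Real.Gamma (γ+1) * Real.Gamma (γ+1) / Real.Gamma (2*γ+2) := by
    rw [hσ, beta_eval hγ hγ, show γ + γ + 2 = 2*γ+2 by ring]
  have h2γ3 : (2*γ+3:ℝ) ≠ 0 := by linarith
  have h2γ2 : (2*γ+2:ℝ) ≠ 0 := by linarith
  have hGne : Real.Gamma (2*γ+2) ≠ 0 := hG2.ne'
  have hae : ∀ᵐ x : ℝ ∂volume, x ≠ 1 := by
    simp only [ne_eq, MeasureTheory.ae_iff, not_not]
    rw [show {x : ℝ | x = 1} = {1} from Set.setOf_eq_eq_singleton]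
    exact measure_singleton 1
  constructor
  · rw [intervalIntegral.integral_congr
      (g := fun t : ℝ => t ^ γ * (1-t) ^ γ * (-(1/4)))
      (fun t _ => by rw [F0 t])]
    rw [intervalIntegral.integral_mul_const, ← hσ]
    ring
  · intro i hij
    have hcases : i = j + 1 ∨ i = j + 2 := tri i j hij
    have main1 : (∫ t in (0:ℝ)..1, t ^ γ * (1 - t) ^ γ *
        phiAF lam (j+1) (t • midpt v (j+1) + (1-t) • midpt v (j+2)))
        = σ * (-(5 * γ + 6) / (8 * (2 * γ + 3))) := by
      have hEq : ∀ᵐ t : ℝ ∂volume, t ∈ Set.uIoc (0:ℝ) 1 →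
          t ^ γ * (1 - t) ^ γ * phiAF lam (j+1) (t • midpt v (j+1) + (1-t) • midpt v (j+2))
          = (3/4) * (t ^ γ * (1-t) ^ (γ+2)) + (-1) * (t ^ γ * (1-t) ^ (γ+1)) := by
        filter_upwards [hae] with t ht hmem
        rw [Set.uIoc_of_le (by norm_num : (0:ℝ) ≤ 1)] at hmem
        have h1t : 0 < 1 - t := by
          rcases lt_or_eq_of_le hmem.2 with h | h
          · linarith
          · exact absurd h ht
        have w1 : (1-t) ^ (γ+1) = (1-t) ^ γ * (1-t) := by
          rw [Real.rpow_add h1t, Real.rpow_one]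
        have w2 : (1-t) ^ (γ+2) = (1-t) ^ γ * ((1-t) * (1-t)) := by
          rw [show γ + 2 = (γ+1) + 1 by ring, Real.rpow_add h1t, Real.rpow_one, w1]
          ring
        rw [F1 t, w1, w2]
        ring
      rw [intervalIntegral.integral_congr_ae hEq,
        intervalIntegral.integral_add
          ((beta_integrable hγ hγ'').const_mul _)
          ((beta_integrable hγ hγ').const_mul _),
        intervalIntegral.integral_const_mul, intervalIntegral.integral_const_mul,
        beta_eval hγ hγ'', beta_eval hγ hγ',
        show γ + (γ+2) + 2 = 2*γ+4 by ring, show γ + (γ+1) + 2 = 2*γ+3 by ring,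
        show γ+2+1 = γ+3 by ring, show γ+1+1 = γ+2 by ring,
        g2, g3, G3, G4, hσ']
      field_simp
      have h2γ3'' : γ * 2 + 3 ≠ 0 := by linarith
      field_simp
      ring
    have main2 : (∫ t in (0:ℝ)..1, t ^ γ * (1 - t) ^ γ *
        phiAF lam (j+2) (t • midpt v (j+1) + (1-t) • midpt v (j+2)))
        = σ * (-(5 * γ + 6) / (8 * (2 * γ + 3))) := by
      have hEq : ∀ᵐ t : ℝ ∂volume, t ∈ Set.uIoc (0:ℝ) 1 →
          t ^ γ * (1 - t) ^ γ * phiAF lam (j+2) (t • midpt v (j+1) + (1-t) • midpt v (j+2))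
          = (3/4) * (t ^ (γ+2) * (1-t) ^ γ) + (-1) * (t ^ (γ+1) * (1-t) ^ γ) := by
        filter_upwards with t hmem
        rw [Set.uIoc_of_le (by norm_num : (0:ℝ) ≤ 1)] at hmem
        have h0t : 0 < t := hmem.1
        have w1 : t ^ (γ+1) = t ^ γ * t := by
          rw [Real.rpow_add h0t, Real.rpow_one]
        have w2 : t ^ (γ+2) = t ^ γ * (t * t) := by
          rw [show γ + 2 = (γ+1) + 1 by ring, Real.rpow_add h0t, Real.rpow_one, w1]
          ring
        rw [F2 t, w1, w2]
        ring
      rw [intervalIntegral.integral_congr_ae hEq,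
        intervalIntegral.integral_add
          ((beta_integrable hγ'' hγ).const_mul _)
          ((beta_integrable hγ' hγ).const_mul _),
        intervalIntegral.integral_const_mul, intervalIntegral.integral_const_mul,
        beta_eval hγ'' hγ, beta_eval hγ' hγ,
        show (γ+2) + γ + 2 = 2*γ+4 by ring, show (γ+1) + γ + 2 = 2*γ+3 by ring,
        show γ+2+1 = γ+3 by ring, show γ+1+1 = γ+2 by ring,
        g2, g3, G3, G4, hσ']
      field_simp
      have h2γ3'' : γ * 2 + 3 ≠ 0 := by linarith
      field_simp
      ring
    rcases hcases with h | h
    · rw [h]; exact main1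
    · rw [h]; exact main2
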